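/- Sufficiency (characterization of closure under comparability): let 1 ≤ d_1 ≤ ... ≤ d_s and for each i let M_i = B(w_i) be the principal strongly stable set of a monomial w_i of degree d_i, and suppose max(w_i) ≤ min(w_{i+1}) for 1 ≤ i ≤ s-1. Set M_0 = {X_1,...,X_n}. Then M = ⨆_{i=0}^s M_i is closed under comparability: for u ∈ M_k and v ∈ M_l with k < l, both components of ord(u,v) lie in M_k and M_l respectively, and for u, v ∈ M_i, both components of sort(u,v) lie in M_i. -/

import Mathlib

/-! Multi-Rees setup.  Monomials are multisets of variable indices
(index `a` ↔ `X_{a+1}`; smaller index = larger variable). -/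

def stdList (m : Multiset ℕ) : List ℕ := m.sort (· ≤ ·)

def evens (l : List ℕ) : List ℕ := ((l.zipIdx.map Prod.swap).filter fun p => p.1 % 2 == 0).map Prod.snd

def odds (l : List ℕ) : List ℕ := ((l.zipIdx.map Prod.swap).filter fun p => p.1 % 2 == 1).map Prod.snd

/-- `sort(u,v)` of two equal-degree monomials. -/
def sortPair (u v : Multiset ℕ) : Multiset ℕ × Multiset ℕ :=
  (((evens (stdList (u + v)) : List ℕ) : Multiset ℕ),
   ((odds (stdList (u + v)) : List ℕ) : Multiset ℕ))

/-- `ord(u,v)` for `deg u ≤ deg v`. -/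
def ordPair (u v : Multiset ℕ) : Multiset ℕ × Multiset ℕ :=
  ((((stdList (u + v)).drop (Multiset.card v) : List ℕ) : Multiset ℕ),
   (((stdList (u + v)).take (Multiset.card v) : List ℕ) : Multiset ℕ))

/-- Graded reverse-lex `u >_rev v` for equal-degree monomials. -/
def revGtM (u v : Multiset ℕ) : Prop :=
  ∃ k, (stdList u).getD k 0 < (stdList v).getD k 0 ∧
    ∀ k', k < k' → (stdList u).getD k' 0 = (stdList v).getD k' 0

/-- `memB w v` means `v ∈ B(w)`, the principal strongly stable set of `w`:
the closure of `{w}` under replacing an occurring index `j` by some `i < j`. -/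
inductive memB (w : Multiset ℕ) : Multiset ℕ → Prop
  | base : memB w w
  | step (v : Multiset ℕ) (i j : ℕ) (hij : i < j) (hj : j ∈ v) (hv : memB w v) :
      memB w (i ::ₘ v.erase j)

/-- The levels of `M`: `M_0 = {X_1,…,X_n}` (the singleton multisets `{a}`, `a < n`)
and `M_i = B(w_i)` for `i ≥ 1`. -/
def Mset (n : ℕ) (w : ℕ → Multiset ℕ) (i : ℕ) : Set (Multiset ℕ) :=
  if i = 0 then { m | ∃ a < n, m = ({a} : Multiset ℕ) } else { v | memB (w i) v }


def cnt (t : ℕ) (m : Multiset ℕ) : ℕ := Multiset.card (m.filter (fun a => t ≤ a))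

lemma cnt_cons (t a : ℕ) (m : Multiset ℕ) :
    cnt t (a ::ₘ m) = (if t ≤ a then 1 else 0) + cnt t m := by
  simp [cnt, Multiset.filter_cons]; split <;> simp

lemma cnt_le_card (t : ℕ) (m : Multiset ℕ) : cnt t m ≤ Multiset.card m :=
  Multiset.card_le_card (Multiset.filter_le _ _)

lemma cnt_zero (m : Multiset ℕ) : cnt 0 m = Multiset.card m := by
  simp [cnt, Multiset.filter_eq_self.2 (fun a _ => Nat.zero_le a)]

lemma cnt_add (t : ℕ) (m m' : Multiset ℕ) : cnt t (m + m') = cnt t m + cnt t m' := by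
  simp [cnt, Multiset.filter_add]

lemma cnt_succ_add_count (a : ℕ) (m : Multiset ℕ) :
    cnt (a + 1) m + Multiset.count a m = cnt a m := by
  induction m using Multiset.induction with
  | empty => simp [cnt]
  | cons b m ih =>
    rw [cnt_cons, cnt_cons, Multiset.count_cons]
    split_ifs <;> omega

lemma eq_of_cnt_eq {v w : Multiset ℕ} (h : ∀ t, cnt t v = cnt t w) : v = w := by
  ext a
  have h1 := cnt_succ_add_count a v
  have h2 := cnt_succ_add_count a w
  have := h a; have := h (a + 1); omega

lemma cnt_eq_card_of_all {t : ℕ} {m : Multiset ℕ} (h : ∀ a ∈ m, t ≤ a) :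
    cnt t m = Multiset.card m := by
  simp [cnt, Multiset.filter_eq_self.2 h]

lemma exists_mem_le_of_cnt_pos {t : ℕ} {m : Multiset ℕ} (h : 0 < cnt t m) :
    ∃ a ∈ m, t ≤ a := by
  obtain ⟨a, ha⟩ := Multiset.card_pos_iff_exists_mem.1 h
  exact ⟨a, (Multiset.mem_filter.1 ha).1, (Multiset.mem_filter.1 ha).2⟩

lemma sum_eq_sum_cnt (B : ℕ) (m : Multiset ℕ) (h : ∀ a ∈ m, a < B) :
    m.sum = ∑ t ∈ Finset.range B, cnt (t + 1) m := by
  induction m using Multiset.induction with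
  | empty => simp [cnt]
  | cons b m ih =>
    have hb : b < B := h b (Multiset.mem_cons_self _ _)
    have hm : ∀ a ∈ m, a < B := fun a ha => h a (Multiset.mem_cons_of_mem ha)
    rw [Multiset.sum_cons, ih hm]
    have : ∀ t, cnt (t + 1) (b ::ₘ m) = (if t + 1 ≤ b then 1 else 0) + cnt (t + 1) m :=
      fun t => cnt_cons _ _ _
    simp only [this, Finset.sum_add_distrib]
    have : ∑ t ∈ Finset.range B, (if t + 1 ≤ b then 1 else 0) = b := by
      rw [← Finset.sum_filter]
      have : Finset.filter (fun t => t + 1 ≤ b) (Finset.range B) = Finset.range b := by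
        ext x; simp [Finset.mem_filter, Finset.mem_range]; omega
      rw [this]
      simp
    omega

lemma sum_le_sum_of_cnt_le {v w : Multiset ℕ} (h : ∀ t, cnt t v ≤ cnt t w) :
    v.sum ≤ w.sum := by
  set B := v.sum + w.sum + 1 with hB
  have hv : ∀ a ∈ v, a < B := fun a ha => by
    have := Multiset.single_le_sum (fun x _ => Nat.zero_le x) a ha; omega
  have hw : ∀ a ∈ w, a < B := fun a ha => by
    have := Multiset.single_le_sum (fun x _ => Nat.zero_le x) a ha; omega
  rw [sum_eq_sum_cnt B v hv, sum_eq_sum_cnt B w hw]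
  exact Finset.sum_le_sum fun t _ => h (t + 1)

lemma exists_step {v w : Multiset ℕ} (hc : Multiset.card v = Multiset.card w)
    (h : ∀ t, cnt t v ≤ cnt t w) (hne : v ≠ w) :
    ∃ i, i ∈ v ∧ (∀ t, cnt t ((i + 1) ::ₘ v.erase i) ≤ cnt t w) := by
  have hex : ∃ t, cnt t v < cnt t w := by
    by_contra hno
    push_neg at hno
    exact hne (eq_of_cnt_eq fun t => le_antisymm (h t) (hno t))
  classical
  obtain ⟨T, ht, htmin⟩ : ∃ T, cnt T v < cnt T w ∧ ∀ t'', t'' < T → ¬ cnt t'' v < cnt t'' w :=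
    ⟨Nat.find hex, Nat.find_spec hex, fun t'' h'' => Nat.find_min hex h''⟩
  have hT0 : T ≠ 0 := by
    intro h0
    rw [h0, cnt_zero, cnt_zero, hc] at ht
    omega
  obtain ⟨t', rfl⟩ : ∃ t', T = t' + 1 := ⟨T - 1, by omega⟩
  have hprev : cnt t' v = cnt t' w :=
    le_antisymm (h t') (Nat.not_lt.1 (htmin t' (by omega)))
  have hcv := cnt_succ_add_count t' v
  have hcw := cnt_succ_add_count t' w
  have hmem : t' ∈ v := by
    rw [← Multiset.count_pos]; omega
  refine ⟨t', hmem, fun t => ?_⟩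
  have hv : v = t' ::ₘ v.erase t' := (Multiset.cons_erase hmem).symm
  have h1 : cnt t ((t' + 1) ::ₘ v.erase t') = (if t ≤ t' + 1 then 1 else 0) + cnt t (v.erase t') :=
    cnt_cons _ _ _
  have h2 : cnt t v = (if t ≤ t' then 1 else 0) + cnt t (v.erase t') := by
    conv_lhs => rw [hv]
    exact cnt_cons _ _ _
  have h3 := h t
  rcases Nat.lt_trichotomy t (t' + 1) with hlt | heq | hgt
  · have hle : t ≤ t' := by omega
    rw [if_pos (by omega : t ≤ t' + 1)] at h1
    rw [if_pos hle] at h2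
    omega
  · subst heq
    rw [if_pos le_rfl] at h1
    rw [if_neg (by omega : ¬ t' + 1 ≤ t')] at h2
    omega
  · rw [if_neg (by omega : ¬ t ≤ t' + 1)] at h1
    rw [if_neg (by omega : ¬ t ≤ t')] at h2
    omega

lemma memB_card {w v : Multiset ℕ} (h : memB w v) : Multiset.card v = Multiset.card w := by
  induction h with
  | base => rfl
  | step v i j hij hj hv ih =>
    have he : Multiset.card (v.erase j) + 1 = Multiset.card v := Multiset.card_erase_add_one hj
    rw [Multiset.card_cons]
    omega

lemma memB_cnt {w v : Multiset ℕ} (h : memB w v) : ∀ t, cnt t v ≤ cnt t w := by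
  induction h with
  | base => exact fun t => le_rfl
  | step v i j hij hj hv ih =>
    intro t
    have h1 : cnt t (i ::ₘ v.erase j) = (if t ≤ i then 1 else 0) + cnt t (v.erase j) :=
      cnt_cons _ _ _
    have h2 : cnt t v = (if t ≤ j then 1 else 0) + cnt t (v.erase j) := by
      conv_lhs => rw [(Multiset.cons_erase hj).symm]
      exact cnt_cons _ _ _
    have h3 := ih t
    split_ifs at h1 h2 <;> omega

lemma memB_elem_lt {w v : Multiset ℕ} {n : ℕ} (h : memB w v) (hn : ∀ a ∈ w, a < n) :
    ∀ a ∈ v, a < n := by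
  induction h with
  | base => exact hn
  | step v i j hij hj hv ih =>
    intro a ha
    rcases Multiset.mem_cons.1 ha with rfl | ha
    · exact lt_of_lt_of_le hij (le_of_lt (ih j hj))
    · exact ih a (Multiset.mem_of_mem_erase ha)

lemma memB_of_cnt {w : Multiset ℕ} : ∀ N v, Multiset.card v = Multiset.card w →
    (∀ t, cnt t v ≤ cnt t w) → w.sum ≤ v.sum + N → memB w v := by
  intro N
  induction N with
  | zero =>
    intro v hc h hsum
    have : v = w := by
      by_contra hne
      obtain ⟨i, hi, hcnt⟩ := exists_step hc h hne
      have hle := sum_le_sum_of_cnt_le hcnt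
      have h1 : ((i + 1) ::ₘ v.erase i).sum = i + 1 + (v.erase i).sum := Multiset.sum_cons _ _
      have h2 : v.sum = i + (v.erase i).sum := by
        conv_lhs => rw [(Multiset.cons_erase hi).symm]
        exact Multiset.sum_cons _ _
      omega
    rw [this]; exact memB.base
  | succ N ih =>
    intro v hc h hsum
    by_cases hne : v = w
    · rw [hne]; exact memB.base
    obtain ⟨i, hi, hcnt⟩ := exists_step hc h hne
    have hc' : Multiset.card ((i + 1) ::ₘ v.erase i) = Multiset.card w := by
      have he : Multiset.card (v.erase i) + 1 = Multiset.card v := Multiset.card_erase_add_one hi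
      rw [Multiset.card_cons]
      omega
    have h1 : ((i + 1) ::ₘ v.erase i).sum = i + 1 + (v.erase i).sum := Multiset.sum_cons _ _
    have h2 : v.sum = i + (v.erase i).sum := by
      conv_lhs => rw [(Multiset.cons_erase hi).symm]
      exact Multiset.sum_cons _ _
    have hstep := ih ((i + 1) ::ₘ v.erase i) hc' hcnt (by omega)
    have : v = i ::ₘ ((i + 1) ::ₘ v.erase i).erase (i + 1) := by
      rw [Multiset.erase_cons_head, Multiset.cons_erase hi]
    rw [this]
    exact memB.step _ i (i + 1) (Nat.lt_succ_self i) (Multiset.mem_cons_self _ _) hstep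

lemma memB_iff {w v : Multiset ℕ} :
    memB w v ↔ Multiset.card v = Multiset.card w ∧ ∀ t, cnt t v ≤ cnt t w := by
  constructor
  · exact fun h => ⟨memB_card h, memB_cnt h⟩
  · rintro ⟨hc, h⟩
    exact memB_of_cnt w.sum v hc h (by omega)

mutual
def evL : List ℕ → List ℕ
  | [] => []
  | a :: l => a :: odL l
def odL : List ℕ → List ℕ
  | [] => []
  | _ :: l => evL l
end

lemma evL_odL_length : ∀ l : List ℕ,
    (evL l).length = (l.length + 1) / 2 ∧ (odL l).length = l.length / 2 := by
  intro l
  induction l with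
  | nil => simp [evL, odL]
  | cons a l ih =>
    simp only [evL, odL, List.length_cons]
    omega

lemma enum_parity : ∀ (l : List ℕ) (n : ℕ),
    (((l.zipIdx n).map Prod.swap).filter (fun p => p.1 % 2 == 0)).map Prod.snd
      = (if n % 2 = 0 then evL l else odL l) ∧
    (((l.zipIdx n).map Prod.swap).filter (fun p => p.1 % 2 == 1)).map Prod.snd
      = (if n % 2 = 0 then odL l else evL l) := by
  intro l
  induction l with
  | nil => intro n; simp [evL, odL]
  | cons a l ih =>
    intro n
    obtain ⟨ih0, ih1⟩ := ih (n + 1)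
    rcases Nat.mod_two_eq_zero_or_one n with h | h
    · have h1 : (n + 1) % 2 = 1 := by omega
      rw [h1] at ih0 ih1
      simp only [List.zipIdx_cons, List.map_cons, Prod.swap, List.filter_cons]
      simp [h, evL, odL, ih0, ih1]
    · have h1 : (n + 1) % 2 = 0 := by omega
      rw [h1] at ih0 ih1
      simp only [List.zipIdx_cons, List.map_cons, Prod.swap, List.filter_cons]
      simp [h, evL, odL, ih0, ih1]

lemma evens_eq_evL (l : List ℕ) : evens l = evL l := by
  have := (enum_parity l 0).1
  simpa [evens] using this

lemma odds_eq_odL (l : List ℕ) : odds l = odL l := by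
  have := (enum_parity l 0).2
  simpa [odds] using this

lemma cnt_coe_cons (t a : ℕ) (l : List ℕ) :
    cnt t (↑(a :: l) : Multiset ℕ) = (if t ≤ a then 1 else 0) + cnt t (↑l : Multiset ℕ) := by
  rw [← Multiset.cons_coe]
  exact cnt_cons _ _ _

lemma evod_cnt : ∀ (N : ℕ) (L : List ℕ), L.length ≤ N → L.Pairwise (· ≤ ·) → L.length % 2 = 0 →
    ∀ t, 2 * cnt t (↑(evL L) : Multiset ℕ) ≤ cnt t (↑L : Multiset ℕ) ∧
      2 * cnt t (↑(odL L) : Multiset ℕ) ≤ cnt t (↑L : Multiset ℕ) + 1 := by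
  intro N
  induction N with
  | zero =>
    intro L hlen _ _ t
    have : L = [] := List.eq_nil_of_length_eq_zero (Nat.le_zero.1 hlen)
    subst this
    simp [evL, odL, cnt]
  | succ N ih =>
    intro L hlen hsort hpar t
    match L with
    | [] => simp [evL, odL, cnt]
    | [a] => simp at hpar
    | a :: b :: L'' =>
      have hab : a ≤ b := (List.pairwise_cons.1 hsort).1 b (by simp)
      have hsort' : (b :: L'').Pairwise (· ≤ ·) := (List.pairwise_cons.1 hsort).2
      have hsort'' : L''.Pairwise (· ≤ ·) := (List.pairwise_cons.1 hsort').2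
      have hbL : ∀ x ∈ L'', b ≤ x := (List.pairwise_cons.1 hsort').1
      have hlen'' : L''.length ≤ N := by simp at hlen; omega
      have hpar'' : L''.length % 2 = 0 := by simp at hpar ⊢; omega
      obtain ⟨ihe, iho⟩ := ih L'' hlen'' hsort'' hpar'' t
      have hev : evL (a :: b :: L'') = a :: evL L'' := by simp [evL, odL]
      have hod : odL (a :: b :: L'') = b :: odL L'' := by simp [evL, odL]
      rw [hev, hod, cnt_coe_cons, cnt_coe_cons, cnt_coe_cons, cnt_coe_cons]
      have hodlen : cnt t (↑(odL L'') : Multiset ℕ) ≤ L''.length / 2 := by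
        have h1 := cnt_le_card t (↑(odL L'') : Multiset ℕ)
        rw [Multiset.coe_card, (evL_odL_length L'').2] at h1
        exact h1
      constructor
      · have : (if t ≤ a then (1:ℕ) else 0) ≤ (if t ≤ b then 1 else 0) := by
          split_ifs <;> omega
        split_ifs at this ⊢ <;> omega
      · by_cases htb : t ≤ b
        · by_cases hta : t ≤ a
          · simp only [if_pos htb, if_pos hta]; omega
          · -- a < t ≤ b : all of L'' are ≥ b ≥ t
            have hall : cnt t (↑L'' : Multiset ℕ) = L''.length := by
              rw [cnt_eq_card_of_all, Multiset.coe_card]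
              intro x hx
              exact le_trans htb (hbL x (Multiset.mem_coe.1 hx))
            simp only [if_pos htb, if_neg hta]
            omega
        · have hta : ¬ t ≤ a := fun h => htb (le_trans h hab)
          simp only [if_neg htb, if_neg hta]
          omega

lemma sorted_take_drop {L : List ℕ} (h : L.Pairwise (· ≤ ·)) (q : ℕ) :
    ∀ x ∈ L.take q, ∀ y ∈ L.drop q, x ≤ y := by
  have h2 := h
  rw [← List.take_append_drop q L] at h2
  exact (List.pairwise_append.1 h2).2.2

lemma take_drop_cnt {L : List ℕ} (hL : L.Pairwise (· ≤ ·)) (q t : ℕ) :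
    cnt t (↑(L.take q) : Multiset ℕ) + cnt t (↑(L.drop q) : Multiset ℕ) = cnt t (↑L : Multiset ℕ) ∧
    (cnt t (↑(L.take q) : Multiset ℕ) = 0 ∨
      cnt t (↑(L.drop q) : Multiset ℕ) = (L.drop q).length) := by
  constructor
  · conv_rhs => rw [← List.take_append_drop q L]
    rw [← Multiset.coe_add, cnt_add]
  · by_cases h0 : cnt t (↑(L.take q) : Multiset ℕ) = 0
    · exact Or.inl h0
    · right
      obtain ⟨x, hx, htx⟩ := exists_mem_le_of_cnt_pos (Nat.pos_of_ne_zero h0)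
      rw [cnt_eq_card_of_all, Multiset.coe_card]
      intro y hy
      exact le_trans htx (sorted_take_drop hL q x (Multiset.mem_coe.1 hx) y (Multiset.mem_coe.1 hy))

/-- sufficiency: let `1 ≤ d_1 ≤ ⋯ ≤ d_s`, `M_i = B(w_i)` with
`deg w_i = d_i`, and `max(w_i) ≤ min(w_{i+1})` for `1 ≤ i ≤ s-1` (in index terms:
every index of `w_{i+1}` is ≤ every index of `w_i`); set `M_0 = {X_1,…,X_n}`.
Then `M = ⨆_{i=0}^s M_i` is closed under comparability: for `u ∈ M_k`, `v ∈ M_l`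
with `k < l` both components of `ord(u,v)` lie in `M_k` and `M_l` respectively,
and for `u, v ∈ M_i` both components of `sort(u,v)` lie in `M_i`. -/
theorem sufficiency_closed_under_comparability (n s : ℕ) (d : ℕ → ℕ) (w : ℕ → Multiset ℕ)
    (hd0 : d 0 = 1) (hd1 : 1 ≤ d 1)
    (hdmono : ∀ i, 1 ≤ i → i < s → d i ≤ d (i + 1))
    (hcard : ∀ i, 1 ≤ i → i ≤ s → Multiset.card (w i) = d i)
    (hvars : ∀ i, 1 ≤ i → i ≤ s → ∀ a ∈ w i, a < n)
    (hchain : ∀ i, 1 ≤ i → i < s → ∀ a ∈ w i, ∀ b ∈ w (i + 1), b ≤ a) :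
    (∀ k l, k < l → l ≤ s → ∀ u ∈ Mset n w k, ∀ v ∈ Mset n w l,
      (ordPair u v).1 ∈ Mset n w k ∧ (ordPair u v).2 ∈ Mset n w l) ∧
    (∀ i ≤ s, ∀ u ∈ Mset n w i, ∀ v ∈ Mset n w i,
      (sortPair u v).1 ∈ Mset n w i ∧ (sortPair u v).2 ∈ Mset n w i) := by
  classical
  have hdpos : ∀ i, 1 ≤ i → i ≤ s → 1 ≤ d i := by
    intro i hi
    induction i, hi using Nat.le_induction with
    | base => intro _; exact hd1
    | succ i hi ih =>
      intro h
      exact le_trans (ih (by omega)) (hdmono i hi (by omega))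
  have hne : ∀ i, 1 ≤ i → i ≤ s → ∃ a, a ∈ w i := by
    intro i h1 h2
    have : 0 < Multiset.card (w i) := by rw [hcard i h1 h2]; exact hdpos i h1 h2
    exact Multiset.card_pos_iff_exists_mem.1 this
  have hWchain : ∀ k l, 1 ≤ k → k < l → l ≤ s → ∀ b ∈ w l, ∀ a ∈ w k, b ≤ a := by
    intro k l hk hkl
    induction l, hkl using Nat.le_induction with
    | base =>
      intro hls b hb a ha
      exact hchain k hk (by omega) a ha b hb
    | succ l hl ih =>
      intro hls b hb a ha
      obtain ⟨c, hc⟩ := hne l (by omega) (by omega)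
      exact le_trans (hchain l (by omega) (by omega) c hc b hb) (ih (by omega) c hc a ha)
  constructor
  · -- ord part
    intro k l hkl hls u hu v hv
    have hl1 : 1 ≤ l := by omega
    have hl0 : l ≠ 0 := by omega
    set L := stdList (u + v) with hLdef
    have hLs : L.Pairwise (· ≤ ·) := Multiset.pairwise_sort _ _
    have hLc : (↑L : Multiset ℕ) = u + v := Multiset.sort_eq _ _
    have hLlen : L.length = Multiset.card u + Multiset.card v := by
      rw [← Multiset.coe_card, hLc, Multiset.card_add]
    have hcntL : ∀ t, cnt t (↑L : Multiset ℕ) = cnt t u + cnt t v := by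
      intro t; rw [hLc, cnt_add]
    have hv' : memB (w l) v := by
      have := hv; simp only [Mset, if_neg hl0, Set.mem_setOf_eq] at this; exact this
    obtain ⟨hv1, hv2⟩ := memB_iff.1 hv'
    have hdroplen : (L.drop (Multiset.card v)).length = Multiset.card u := by
      rw [List.length_drop, hLlen]; omega
    have htakelen : (L.take (Multiset.card v)).length = Multiset.card v := by
      rw [List.length_take]; omega
    have hord1 : (ordPair u v).1 = (↑(L.drop (Multiset.card v)) : Multiset ℕ) := rfl
    have hord2 : (ordPair u v).2 = (↑(L.take (Multiset.card v)) : Multiset ℕ) := rfl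
    constructor
    · -- first component in Mset k
      rw [hord1]
      by_cases hk0 : k = 0
      · subst hk0
        have hu' : ∃ a < n, u = ({a} : Multiset ℕ) := by
          have := hu; simp only [Mset, if_pos rfl, Set.mem_setOf_eq] at this; exact this
        obtain ⟨a, han, hua⟩ := hu'
        have hcu : Multiset.card u = 1 := by rw [hua]; simp
        obtain ⟨x, hx⟩ := List.length_eq_one_iff.1 (by rw [hdroplen, hcu])
        have hxL : x ∈ L := List.mem_of_mem_drop (by rw [hx]; simp)
        have hxuv : x ∈ u + v := by rw [← hLc]; exact Multiset.mem_coe.2 hxL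
        have hxn : x < n := by
          rcases Multiset.mem_add.1 hxuv with h | h
          · rw [hua] at h; rw [Multiset.mem_singleton.1 h]; exact han
          · exact memB_elem_lt hv' (hvars l hl1 hls) x h
        simp only [Mset, if_pos rfl, Set.mem_setOf_eq]
        exact ⟨x, hxn, by rw [hx]; rfl⟩
      · have hk1 : 1 ≤ k := by omega
        have hu' : memB (w k) u := by
          have := hu; simp only [Mset, if_neg hk0, Set.mem_setOf_eq] at this; exact this
        obtain ⟨hu1, hu2⟩ := memB_iff.1 hu'
        simp only [Mset, if_neg hk0, Set.mem_setOf_eq]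
        apply memB_iff.2
        constructor
        · rw [Multiset.coe_card, hdroplen, hu1]
        · intro t
          obtain ⟨hsum, _⟩ := take_drop_cnt hLs (Multiset.card v) t
          rw [hcntL t] at hsum
          by_cases hcv : cnt t v = 0
          · have : cnt t (↑(L.drop (Multiset.card v)) : Multiset ℕ) ≤ cnt t u := by omega
            exact le_trans this (hu2 t)
          · obtain ⟨b, hb, htb⟩ := exists_mem_le_of_cnt_pos
              (lt_of_lt_of_le (Nat.pos_of_ne_zero hcv) (hv2 t))
            have hall : cnt t (w k) = Multiset.card (w k) :=
              cnt_eq_card_of_all (fun a ha => le_trans htb (hWchain k l hk1 (by omega) hls b hb a ha))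
            have h1 : cnt t (↑(L.drop (Multiset.card v)) : Multiset ℕ) ≤ Multiset.card u := by
              have := cnt_le_card t (↑(L.drop (Multiset.card v)) : Multiset ℕ)
              rw [Multiset.coe_card, hdroplen] at this; exact this
            rw [hall, ← hu1]
            exact h1
    · -- second component in Mset l
      rw [hord2]
      simp only [Mset, if_neg hl0, Set.mem_setOf_eq]
      apply memB_iff.2
      constructor
      · rw [Multiset.coe_card, htakelen, hv1]
      · intro t
        obtain ⟨hsum, halt⟩ := take_drop_cnt hLs (Multiset.card v) t
        rw [hcntL t] at hsum
        rcases halt with h0 | hfull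
        · rw [h0]; exact Nat.zero_le _
        · rw [hdroplen] at hfull
          have hcu : cnt t u ≤ Multiset.card u := cnt_le_card t u
          have : cnt t (↑(L.take (Multiset.card v)) : Multiset ℕ) ≤ cnt t v := by omega
          exact le_trans this (hv2 t)
  · -- sort part
    intro i his u hu v hv
    set L := stdList (u + v) with hLdef
    have hLs : L.Pairwise (· ≤ ·) := Multiset.pairwise_sort _ _
    have hLc : (↑L : Multiset ℕ) = u + v := Multiset.sort_eq _ _
    have hLlen : L.length = Multiset.card u + Multiset.card v := by
      rw [← Multiset.coe_card, hLc, Multiset.card_add]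
    have hcntL : ∀ t, cnt t (↑L : Multiset ℕ) = cnt t u + cnt t v := by
      intro t; rw [hLc, cnt_add]
    have hs1 : (sortPair u v).1 = (↑(evens L) : Multiset ℕ) := rfl
    have hs2 : (sortPair u v).2 = (↑(odds L) : Multiset ℕ) := rfl
    rw [hs1, hs2, evens_eq_evL, odds_eq_odL]
    by_cases hi0 : i = 0
    · subst hi0
      have hu' : ∃ a < n, u = ({a} : Multiset ℕ) := by
        have := hu; simp only [Mset, if_pos rfl, Set.mem_setOf_eq] at this; exact this
      have hv' : ∃ a < n, v = ({a} : Multiset ℕ) := by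
        have := hv; simp only [Mset, if_pos rfl, Set.mem_setOf_eq] at this; exact this
      obtain ⟨a, han, hua⟩ := hu'
      obtain ⟨b, hbn, hvb⟩ := hv'
      have hlen2 : L.length = 2 := by rw [hLlen, hua, hvb]; simp
      obtain ⟨x, y, hxy⟩ := List.length_eq_two.1 hlen2
      have hmem : ∀ z ∈ L, z < n := by
        intro z hz
        have : z ∈ u + v := by rw [← hLc]; exact Multiset.mem_coe.2 hz
        rcases Multiset.mem_add.1 this with h | h
        · rw [hua] at h; rw [Multiset.mem_singleton.1 h]; exact han
        · rw [hvb] at h; rw [Multiset.mem_singleton.1 h]; exact hbn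
      have hxn : x < n := hmem x (by rw [hxy]; simp)
      have hyn : y < n := hmem y (by rw [hxy]; simp)
      have hev : evL L = [x] := by rw [hxy]; simp [evL, odL]
      have hod : odL L = [y] := by rw [hxy]; simp [evL, odL]
      constructor
      · simp only [Mset, if_pos rfl, Set.mem_setOf_eq]
        exact ⟨x, hxn, by rw [hev]; rfl⟩
      · simp only [Mset, if_pos rfl, Set.mem_setOf_eq]
        exact ⟨y, hyn, by rw [hod]; rfl⟩
    · have hi1 : 1 ≤ i := by omega
      have hu' : memB (w i) u := by
        have := hu; simp only [Mset, if_neg hi0, Set.mem_setOf_eq] at this; exact this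
      have hv' : memB (w i) v := by
        have := hv; simp only [Mset, if_neg hi0, Set.mem_setOf_eq] at this; exact this
      obtain ⟨hu1, hu2⟩ := memB_iff.1 hu'
      obtain ⟨hv1, hv2⟩ := memB_iff.1 hv'
      have hpar : L.length % 2 = 0 := by rw [hLlen, hu1, hv1]; omega
      have hevlen : (evL L).length = Multiset.card (w i) := by
        rw [(evL_odL_length L).1, hLlen, hu1, hv1]; omega
      have hodlen : (odL L).length = Multiset.card (w i) := by
        rw [(evL_odL_length L).2, hLlen, hu1, hv1]; omega
      constructor
      · simp only [Mset, if_neg hi0, Set.mem_setOf_eq]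
        apply memB_iff.2
        refine ⟨by rw [Multiset.coe_card, hevlen], fun t => ?_⟩
        have := (evod_cnt L.length L le_rfl hLs hpar t).1
        rw [hcntL t] at this
        have h1 := hu2 t; have h2 := hv2 t
        omega
      · simp only [Mset, if_neg hi0, Set.mem_setOf_eq]
        apply memB_iff.2
        refine ⟨by rw [Multiset.coe_card, hodlen], fun t => ?_⟩
        have := (evod_cnt L.length L le_rfl hLs hpar t).2
        rw [hcntL t] at this
        have h1 := hu2 t; have h2 := hv2 t
        omega
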